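/- Let W be a finite nonempty set of [-A,A]-valued trees of depth n and let η be a [-B,B]-valued tree of depth n. Then E_ε[max_{w∈W} Σ_{t=1}^n ε_t η_t(ε) w_t(ε)] ≤ B · √(2 log|W| · max_{w∈W, ε} Σ_{t=1}^n w_t(ε)²), where ε = (ε₁,...,εₙ) are i.i.d. Rademacher signs and tree labels at level t depend on ε₁,...,ε_{t-1}. -/

import Mathlib

/-- The value of a Rademacher sign: `+1` or `-1`. -/
noncomputable def signVal (b : Bool) : ℝ := if b then 1 else -1

/-- A labeling `z : (Fin n → Bool) → Fin n → ℝ` is a tree of depth `n` if the label at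
level `t` depends only on the signs `ε₁, …, ε_{t-1}`. -/
def IsTree {n : ℕ} (z : (Fin n → Bool) → Fin n → ℝ) : Prop :=
  ∀ ε ε' : Fin n → Bool, ∀ t : Fin n, (∀ s : Fin n, s < t → ε s = ε' s) → z ε t = z ε' t

lemma key_tree_bound (n : ℕ) (a : (Fin n → Bool) → Fin n → ℝ) (ha : IsTree a) :
    ∑ ε : Fin n → Bool, Real.exp (∑ t, (signVal (ε t) * a ε t - (a ε t)^2/2)) ≤ 2^n := by
  induction n with
  | zero => simp
  | succ n ih =>
    have hsum : ∑ ε : Fin (n+1) → Bool,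
          Real.exp (∑ t, (signVal (ε t) * a ε t - (a ε t)^2/2))
        = ∑ p : Bool × (Fin n → Bool),
          Real.exp (∑ t, (signVal ((Fin.cons p.1 p.2 : Fin (n+1) → Bool) t)
            * a (Fin.cons p.1 p.2) t - (a (Fin.cons p.1 p.2) t)^2/2)) :=
      (Fintype.sum_equiv (Fin.consEquiv fun _ => Bool) _ _ (fun p => rfl)).symm
    rw [hsum, Fintype.sum_prod_type]
    -- the root label is constant
    set c : ℝ := a (fun _ => true) 0 with hc
    have hconst : ∀ ε : Fin (n+1) → Bool, a ε 0 = c := by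
      intro ε
      exact ha ε (fun _ => true) 0 (fun s hs => absurd hs (by simp [Fin.lt_def, Fin.le_zero_iff]))
    have hsub : ∀ b : Bool, IsTree (fun (ε' : Fin n → Bool) (t : Fin n) =>
        a (Fin.cons b ε') t.succ) := by
      intro b ε' η' t h
      apply ha
      intro s
      refine Fin.cases (fun _ => by simp) (fun r hr => ?_) s
      simp only [Fin.cons_succ]
      exact h r (by simpa [Fin.succ_lt_succ_iff] using hr)
    have hterm : ∀ (b : Bool) (ε' : Fin n → Bool),
        Real.exp (∑ t : Fin (n+1), (signVal ((Fin.cons b ε' : Fin (n+1) → Bool) t)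
            * a (Fin.cons b ε') t - (a (Fin.cons b ε') t)^2/2))
        = Real.exp (signVal b * c - c^2/2) *
          Real.exp (∑ t : Fin n, (signVal (ε' t) * a (Fin.cons b ε') t.succ
            - (a (Fin.cons b ε') t.succ)^2/2)) := by
      intro b ε'
      rw [← Real.exp_add, Fin.sum_univ_succ]
      simp [hconst, Fin.cons_succ, Fin.cons_zero]
    have hinner : ∀ b : Bool,
        ∑ ε' : Fin n → Bool, Real.exp (∑ t : Fin n, (signVal (ε' t)
          * a (Fin.cons b ε') t.succ - (a (Fin.cons b ε') t.succ)^2/2)) ≤ 2^n :=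
      fun b => ih _ (hsub b)
    have hcosh : Real.exp (signVal true * c - c^2/2) + Real.exp (signVal false * c - c^2/2)
        ≤ 2 := by
      have h1 : Real.exp c + Real.exp (-c) = 2 * Real.cosh c := by
        rw [Real.cosh_eq]; ring
      have h2 : Real.cosh c ≤ Real.exp (c^2/2) := Real.cosh_le_exp_half_sq c
      have h3 : Real.exp (signVal true * c - c^2/2) + Real.exp (signVal false * c - c^2/2)
          = (Real.exp c + Real.exp (-c)) * Real.exp (-(c^2/2)) := by
        simp [signVal, Real.exp_sub, Real.exp_neg]
        ring
      rw [h3, h1]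
      calc 2 * Real.cosh c * Real.exp (-(c^2/2))
          ≤ 2 * Real.exp (c^2/2) * Real.exp (-(c^2/2)) := by
            have := Real.exp_pos (-(c^2/2))
            nlinarith
        _ = 2 := by rw [mul_assoc, ← Real.exp_add]; simp
    calc ∑ b : Bool, ∑ ε' : Fin n → Bool,
          Real.exp (∑ t : Fin (n+1), (signVal ((Fin.cons b ε' : Fin (n+1) → Bool) t)
            * a (Fin.cons b ε') t - (a (Fin.cons b ε') t)^2/2))
        ≤ ∑ b : Bool, Real.exp (signVal b * c - c^2/2) * 2^n := by
          apply Finset.sum_le_sum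
          intro b _
          calc ∑ ε' : Fin n → Bool, _ = ∑ ε' : Fin n → Bool,
                Real.exp (signVal b * c - c^2/2) *
                Real.exp (∑ t : Fin n, (signVal (ε' t) * a (Fin.cons b ε') t.succ
                  - (a (Fin.cons b ε') t.succ)^2/2)) := by
                exact Finset.sum_congr rfl fun ε' _ => hterm b ε'
            _ = Real.exp (signVal b * c - c^2/2) * ∑ ε' : Fin n → Bool,
                Real.exp (∑ t : Fin n, (signVal (ε' t) * a (Fin.cons b ε') t.succ
                  - (a (Fin.cons b ε') t.succ)^2/2)) := by rw [Finset.mul_sum]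
            _ ≤ Real.exp (signVal b * c - c^2/2) * 2^n := by
                exact mul_le_mul_of_nonneg_left (hinner b) (Real.exp_pos _).le
      _ ≤ 2 * 2^n := by
          rw [Fintype.sum_bool]
          nlinarith [hcosh, pow_pos (by norm_num : (0:ℝ) < 2) n]
      _ = 2^(n+1) := by ring

set_option maxHeartbeats 1000000 in
theorem finite_class_maximal_inequality
    {n : ℕ} {W : Type*} [Fintype W] [Nonempty W]
    (A B : ℝ) (hA : 0 < A) (hB : 0 < B)
    (η : (Fin n → Bool) → Fin n → ℝ) (hηtree : IsTree η)
    (hηbd : ∀ ε t, |η ε t| ≤ B)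
    (w : W → (Fin n → Bool) → Fin n → ℝ) (hwtree : ∀ i, IsTree (w i))
    (hwbd : ∀ i ε t, |w i ε t| ≤ A) :
    (1 / 2 ^ n : ℝ) * ∑ ε : Fin n → Bool,
        (Finset.univ.sup' Finset.univ_nonempty (fun i : W =>
          ∑ t : Fin n, signVal (ε t) * η ε t * w i ε t))
      ≤ B * Real.sqrt (2 * Real.log (Fintype.card W) *
          Finset.univ.sup' Finset.univ_nonempty
            (fun p : W × (Fin n → Bool) => ∑ t : Fin n, (w p.1 p.2 t)^2)) := by
  classical
  set X : W → (Fin n → Bool) → ℝ :=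
    fun i ε => ∑ t : Fin n, signVal (ε t) * η ε t * w i ε t with hX
  set S : (Fin n → Bool) → ℝ :=
    fun ε => Finset.univ.sup' Finset.univ_nonempty (fun i : W => X i ε) with hS
  set L : ℝ := Real.log (Fintype.card W) with hLdef
  set M : ℝ := Finset.univ.sup' Finset.univ_nonempty
    (fun p : W × (Fin n → Bool) => ∑ t : Fin n, (w p.1 p.2 t)^2) with hMdef
  set K : ℝ := B^2 * M with hKdef
  have hNpos : (0:ℝ) < Fintype.card W := by exact_mod_cast Fintype.card_pos
  have hL0 : 0 ≤ L := Real.log_nonneg (by exact_mod_cast Fintype.card_pos)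
  have hM0 : 0 ≤ M := by
    have := Finset.le_sup' (fun p : W × (Fin n → Bool) => ∑ t : Fin n, (w p.1 p.2 t)^2)
      (Finset.mem_univ (Classical.arbitrary W, fun _ => true))
    refine le_trans ?_ this
    positivity
  have hK0 : 0 ≤ K := by positivity
  have hpow : (0:ℝ) < 2 ^ n := by positivity
  have hcardeps : (Fintype.card (Fin n → Bool) : ℝ) = 2 ^ n := by
    simp [Fintype.card_fun]
  -- main claim: the lambda bound
  have claim : ∀ l : ℝ, 0 < l →
      (1 / 2 ^ n : ℝ) * ∑ ε : Fin n → Bool, S ε ≤ L / l + l * K / 2 := by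
    intro l hl
    -- per-element MGF bound
    have mgf : ∀ i : W, ∑ ε : Fin n → Bool, Real.exp (l * X i ε)
        ≤ Real.exp (l^2 * K / 2) * 2 ^ n := by
      intro i
      set a : (Fin n → Bool) → Fin n → ℝ := fun ε t => l * (η ε t * w i ε t) with ha
      have hatree : IsTree a := by
        intro ε ε' t h
        simp only [ha]
        rw [hηtree ε ε' t h, hwtree i ε ε' t h]
      have hsq : ∀ ε : Fin n → Bool, ∑ t : Fin n, (a ε t)^2 / 2 ≤ l^2 * K / 2 := by
        intro ε
        have h1 : ∀ t : Fin n, (a ε t)^2 / 2 ≤ l^2 * B^2 * (w i ε t)^2 / 2 := by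
          intro t
          have hb := hηbd ε t
          have hb' := abs_nonneg (η ε t)
          have h2 : (η ε t)^2 ≤ B^2 := by
            have := sq_abs (η ε t)
            nlinarith
          have h3 : (0:ℝ) ≤ (w i ε t)^2 := sq_nonneg _
          simp only [ha]
          have hexpand : (l * (η ε t * w i ε t))^2 = l^2 * (η ε t)^2 * (w i ε t)^2 := by ring
          nlinarith [mul_nonneg (mul_nonneg (sq_nonneg l) h3) (sub_nonneg.mpr h2)]
        calc ∑ t : Fin n, (a ε t)^2 / 2 ≤ ∑ t : Fin n, l^2 * B^2 * (w i ε t)^2 / 2 :=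
              Finset.sum_le_sum fun t _ => h1 t
          _ = l^2 * B^2 / 2 * ∑ t : Fin n, (w i ε t)^2 := by
              rw [Finset.mul_sum]; exact Finset.sum_congr rfl fun t _ => by ring
          _ ≤ l^2 * B^2 / 2 * M := by
              refine mul_le_mul_of_nonneg_left ?_ (by positivity)
              exact Finset.le_sup' (fun p : W × (Fin n → Bool) => ∑ t : Fin n, (w p.1 p.2 t)^2)
                (Finset.mem_univ (i, ε))
          _ = l^2 * K / 2 := by rw [hKdef]; ring
      have hexp : ∀ ε : Fin n → Bool, Real.exp (l * X i ε)
          ≤ Real.exp (l^2 * K / 2) *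
            Real.exp (∑ t : Fin n, (signVal (ε t) * a ε t - (a ε t)^2/2)) := by
        intro ε
        rw [← Real.exp_add]
        apply Real.exp_le_exp.mpr
        have h4 : l * X i ε = ∑ t : Fin n, signVal (ε t) * a ε t := by
          rw [hX, Finset.mul_sum]
          exact Finset.sum_congr rfl fun t _ => by simp only [ha]; ring
        have h5 : ∑ t : Fin n, (signVal (ε t) * a ε t - (a ε t)^2/2)
            = (∑ t : Fin n, signVal (ε t) * a ε t) - ∑ t : Fin n, (a ε t)^2/2 :=
          Finset.sum_sub_distrib _ _
        rw [h4, h5]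
        linarith [hsq ε]
      calc ∑ ε : Fin n → Bool, Real.exp (l * X i ε)
          ≤ ∑ ε : Fin n → Bool, Real.exp (l^2 * K / 2) *
              Real.exp (∑ t : Fin n, (signVal (ε t) * a ε t - (a ε t)^2/2)) :=
            Finset.sum_le_sum fun ε _ => hexp ε
        _ = Real.exp (l^2 * K / 2) * ∑ ε : Fin n → Bool,
              Real.exp (∑ t : Fin n, (signVal (ε t) * a ε t - (a ε t)^2/2)) := by
            rw [Finset.mul_sum]
        _ ≤ Real.exp (l^2 * K / 2) * 2 ^ n :=
            mul_le_mul_of_nonneg_left (key_tree_bound n a hatree) (Real.exp_pos _).le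
    -- Jensen step
    have jensen : Real.exp (l * ((1 / 2 ^ n : ℝ) * ∑ ε : Fin n → Bool, S ε))
        ≤ ∑ ε : Fin n → Bool, (1 / 2 ^ n : ℝ) * Real.exp (l * S ε) := by
      have key := convexOn_exp.map_sum_le (t := Finset.univ)
        (w := fun _ : Fin n → Bool => (1 / 2 ^ n : ℝ)) (p := fun ε => l * S ε)
        (fun _ _ => by positivity)
        (by rw [Finset.sum_const, Finset.card_univ, nsmul_eq_mul, hcardeps]; field_simp)
        (fun _ _ => Set.mem_univ _)
      simpa [smul_eq_mul, Finset.mul_sum, mul_comm, mul_left_comm] using key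
    have hsupexp : ∀ ε : Fin n → Bool, Real.exp (l * S ε)
        ≤ ∑ i : W, Real.exp (l * X i ε) := by
      intro ε
      obtain ⟨i0, -, hi0⟩ := Finset.exists_mem_eq_sup' (Finset.univ_nonempty (α := W))
        (fun i : W => X i ε)
      rw [hS]
      simp only
      rw [hi0]
      exact Finset.single_le_sum (f := fun i : W => Real.exp (l * X i ε))
        (fun i _ => (Real.exp_pos _).le) (Finset.mem_univ i0)
    have chain : Real.exp (l * ((1 / 2 ^ n : ℝ) * ∑ ε : Fin n → Bool, S ε))
        ≤ Real.exp (L + l^2 * K / 2) := by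
      calc Real.exp (l * ((1 / 2 ^ n : ℝ) * ∑ ε : Fin n → Bool, S ε))
          ≤ ∑ ε : Fin n → Bool, (1 / 2 ^ n : ℝ) * Real.exp (l * S ε) := jensen
        _ ≤ ∑ ε : Fin n → Bool, (1 / 2 ^ n : ℝ) * ∑ i : W, Real.exp (l * X i ε) := by
            refine Finset.sum_le_sum fun ε _ => ?_
            exact mul_le_mul_of_nonneg_left (hsupexp ε) (by positivity)
        _ = ∑ i : W, (1 / 2 ^ n : ℝ) * ∑ ε : Fin n → Bool, Real.exp (l * X i ε) := by
            simp_rw [Finset.mul_sum]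
            rw [Finset.sum_comm]
        _ ≤ ∑ i : W, (1 / 2 ^ n : ℝ) * (Real.exp (l^2 * K / 2) * 2 ^ n) := by
            refine Finset.sum_le_sum fun i _ => ?_
            exact mul_le_mul_of_nonneg_left (mgf i) (by positivity)
        _ = (Fintype.card W : ℝ) * Real.exp (l^2 * K / 2) := by
            rw [Finset.sum_const, Finset.card_univ, nsmul_eq_mul]
            field_simp
        _ = Real.exp (L + l^2 * K / 2) := by
            rw [Real.exp_add, hLdef, Real.exp_log hNpos]
    have h6 : l * ((1 / 2 ^ n : ℝ) * ∑ ε : Fin n → Bool, S ε) ≤ L + l^2 * K / 2 :=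
      Real.exp_le_exp.mp chain
    have hR : l * (L / l + l * K / 2) = L + l^2 * K / 2 := by
      field_simp
    rw [← mul_le_mul_iff_right₀ hl, hR]
    exact h6
  -- conclude
  have hRHS : B * Real.sqrt (2 * L * M) = Real.sqrt (2 * L * K) := by
    rw [hKdef, show 2 * L * (B^2 * M) = B^2 * (2 * L * M) by ring,
      Real.sqrt_mul (sq_nonneg B), Real.sqrt_sq hB.le]
  rw [hRHS]
  by_cases hpos : 0 < L ∧ 0 < K
  · obtain ⟨hLpos, hKpos⟩ := hpos
    set l : ℝ := Real.sqrt (2 * L / K) with hldef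
    have hlpos : 0 < l := Real.sqrt_pos.mpr (by positivity)
    have hl2 : l^2 = 2 * L / K := Real.sq_sqrt (by positivity)
    have hKl : Real.sqrt (2 * L * K) = K * l := by
      rw [show 2 * L * K = (K * l)^2 by field_simp at hl2 ⊢; nlinarith]
      exact Real.sqrt_sq (by positivity)
    have h2L : l^2 * K = 2 * L := by
      rw [hl2]; field_simp
    have hLl : L / l = K * l / 2 := by
      field_simp
      nlinarith [h2L]
    calc (1 / 2 ^ n : ℝ) * ∑ ε : Fin n → Bool, S ε ≤ L / l + l * K / 2 := claim l hlpos
      _ = K * l := by rw [hLl]; ring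
      _ = Real.sqrt (2 * L * K) := hKl.symm
  · have havg0 : (1 / 2 ^ n : ℝ) * ∑ ε : Fin n → Bool, S ε ≤ 0 := by
      rcases (not_and_or.mp hpos) with hL | hK
      · have hLeq : L = 0 := le_antisymm (not_lt.mp hL) hL0
        by_contra hcon
        push_neg at hcon
        set v := (1 / 2 ^ n : ℝ) * ∑ ε : Fin n → Bool, S ε with hv
        have hKpos : 0 < K + 1 := by linarith
        have := claim (v / (K + 1)) (by positivity)
        rw [hLeq] at this
        have hvK : v / (K + 1) * K / 2 < v := by
          rw [div_mul_eq_mul_div, div_div]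
          rw [div_lt_iff₀ (by positivity)]
          nlinarith
        simp at this
        linarith
      · have hKeq : K = 0 := le_antisymm (not_lt.mp hK) hK0
        by_contra hcon
        push_neg at hcon
        set v := (1 / 2 ^ n : ℝ) * ∑ ε : Fin n → Bool, S ε with hv
        have := claim (2 * L / v + 1) (by positivity)
        rw [hKeq] at this
        have : v ≤ L / (2 * L / v + 1) := by simpa using this
        have hlt : L / (2 * L / v + 1) < v := by
          rw [div_lt_iff₀ (by positivity)]
          nlinarith [div_nonneg (by linarith : (0:ℝ) ≤ 2*L) hcon.le,
            mul_div_cancel₀ (2*L) hcon.ne']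
        linarith
    exact havg0.trans (Real.sqrt_nonneg _)
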